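/- Let r_1 ≤ ... ≤ r_n and 0 < a_i ≤ b_i. If W* is a maximizer of (∑_i r_i W_i)/(∑_i W_i) over the box, then it cannot happen that W*_i = b_i and W*_j = a_j for indices i < j (with r_i ≤ r_j) unless the objective is constant in those coordinates: formally, if ∂f/∂W_i(W*) > 0 at W* then ∂f/∂W_j(W*) > 0 as well, for any i < j. -/

import Mathlib

lemma stmt4_aux (n : ℕ) (r W : Fin n → ℝ) (hS : 0 < ∑ k, W k) (i : Fin n) (d : ℝ)
    (hd : HasDerivAt
      (fun t => (∑ k, r k * Function.update W i t k) / (∑ k, Function.update W i t k))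
      d (W i)) :
    d = (r i * ∑ k, W k - ∑ k, r k * W k) / (∑ k, W k) ^ 2 := by
  set A : ℝ := ∑ k ∈ Finset.univ \ {i}, W k with hA
  set B : ℝ := ∑ k ∈ Finset.univ \ {i}, r k * W k with hB
  have hsum : ∀ t : ℝ, (∑ k, Function.update W i t k) = t + A := by
    intro t
    rw [Finset.sum_update_of_mem (Finset.mem_univ i)]
  have hrsum : ∀ t : ℝ, (∑ k, r k * Function.update W i t k) = r i * t + B := by
    intro t
    rw [Finset.sum_eq_add_sum_sdiff_singleton_of_mem (Finset.mem_univ i)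
      (fun k => r k * Function.update W i t k)]
    congr 1
    · rw [Function.update_self]
    · exact Finset.sum_congr rfl fun k hk => by
        rw [Function.update_of_ne
          (Finset.notMem_singleton.mp (Finset.mem_sdiff.mp hk).2)]
  have hStot : (∑ k, W k) = W i + A := by
    rw [← hsum (W i)]
    exact (Finset.sum_congr rfl fun k _ => by rw [Function.update_eq_self]).symm
  have hSr : (∑ k, r k * W k) = r i * W i + B := by
    rw [← hrsum (W i)]
    exact (Finset.sum_congr rfl fun k _ => by
      rw [Function.update_eq_self]).symm
  have hne : W i + A ≠ 0 := by rw [← hStot]; exact ne_of_gt hS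
  have hd' : HasDerivAt (fun t : ℝ => (r i * t + B) / (t + A))
      ((r i * (W i + A) - (r i * W i + B) * 1) / (W i + A) ^ 2) (W i) := by
    have h1 : HasDerivAt (fun t : ℝ => r i * t + B) (r i) (W i) := by
      simpa using ((hasDerivAt_id (W i)).const_mul (r i)).add_const B
    have h2 : HasDerivAt (fun t : ℝ => t + A) 1 (W i) :=
      (hasDerivAt_id (W i)).add_const A
    exact h1.div h2 hne
  have heq : d = (r i * (W i + A) - (r i * W i + B) * 1) / (W i + A) ^ 2 := by
    have hd2 : HasDerivAt (fun t : ℝ => (r i * t + B) / (t + A)) d (W i) := by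
      convert hd using 1 with t
      funext t
      rw [hsum, hrsum]
    exact hd2.unique hd'
  rw [heq, hStot, hSr]
  ring_nf

theorem stmt4 (n : ℕ) (r a b W : Fin n → ℝ) (hr : Monotone r)
    (ha : ∀ k, 0 < a k) (hab : ∀ k, a k ≤ b k)
    (hW : ∀ k, W k ∈ Set.Icc (a k) (b k))
    (i j : Fin n) (hij : i < j) (di dj : ℝ)
    (hdi : HasDerivAt
      (fun t => (∑ k, r k * Function.update W i t k) / (∑ k, Function.update W i t k))
      di (W i))
    (hdj : HasDerivAt
      (fun t => (∑ k, r k * Function.update W j t k) / (∑ k, Function.update W j t k))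
      dj (W j))
    (hpos : 0 < di) : 0 < dj := by
  have hS : 0 < ∑ k, W k :=
    Finset.sum_pos (fun k _ => lt_of_lt_of_le (ha k) (hW k).1) ⟨i, Finset.mem_univ i⟩
  have hi := stmt4_aux n r W hS i di hdi
  have hj := stmt4_aux n r W hS j dj hdj
  have hrij : r i ≤ r j := hr hij.le
  have : di ≤ dj := by
    rw [hi, hj]
    apply div_le_div_of_nonneg_right ?_ (by positivity)
    nlinarith
  linarith
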